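/- Let L be a group and let μ : M → L and ν : N → L be crossed modules of groups over L, with induced mutual actions ᵐn := ^(μ(m))n and ⁿm := ^(ν(n))m. Then the commutative square with corners M ⊗ N, M, N, L, maps π_M : M ⊗ N → M and π_N : M ⊗ N → N determined by π_M(m ⊗ n) = m·(ⁿm)⁻¹ and π_N(m ⊗ n) = (ᵐn)·n⁻¹, the given L-actions on M and N, the L-action on M ⊗ N determined by ˡ(m ⊗ n) = (ˡm) ⊗ (ˡn), and the function h : M × N → M ⊗ N, h(m, n) := m ⊗ n, is a crossed square of groups (i.e. satisfies axioms (X0)–(X4)). -/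

import Mathlib

/-- A crossed module of groups: a homomorphism `μ : M → L` together with an action of `L`
on `M` by automorphisms, such that `μ` is equivariant (with `L` acting on itself by
conjugation) and the Peiffer identity holds. -/
def IsCrossedModule {M L : Type*} [Group M] [Group L]
    (μ : M →* L) (σ : L →* MulAut M) : Prop :=
  (∀ l m, μ (σ l m) = l * μ m * l⁻¹) ∧ ∀ m m', σ (μ m) m' = m * m' * m⁻¹

/-- The defining relations of the Brown–Loday non-abelian tensor product of two groups `M`
and `N` acting on each other via `actM : M → N → N` and `actN : N → M → M` (and on
themselves by conjugation): `(m * m') ⊗ n = (ᵐm' ⊗ ᵐn) * (m ⊗ n)` and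
`m ⊗ (n * n') = (m ⊗ n) * (ⁿm ⊗ ⁿn')`. -/
def tensorRels (M N : Type*) [Group M] [Group N]
    (actM : M → N → N) (actN : N → M → M) : Set (FreeGroup (M × N)) :=
  (Set.range fun p : M × M × N =>
    FreeGroup.of (p.1 * p.2.1, p.2.2) *
      (FreeGroup.of (p.1 * p.2.1 * p.1⁻¹, actM p.1 p.2.2) * FreeGroup.of (p.1, p.2.2))⁻¹) ∪
  (Set.range fun p : M × N × N =>
    FreeGroup.of (p.1, p.2.1 * p.2.2) *
      (FreeGroup.of (p.1, p.2.1) *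
        FreeGroup.of (actN p.2.1 p.1, p.2.1 * p.2.2 * p.2.1⁻¹))⁻¹)

/-- The Brown–Loday non-abelian tensor product `M ⊗ N` of groups `M` and `N` acting on
each other, presented by generators `m ⊗ n` and the tensor relations. -/
abbrev NATensor (M N : Type*) [Group M] [Group N]
    (actM : M → N → N) (actN : N → M → M) : Type _ :=
  PresentedGroup (tensorRels M N actM actN)

/-- The generator `m ⊗ n` of the non-abelian tensor product. -/
abbrev tensorOf {M N : Type*} [Group M] [Group N]
    {actM : M → N → N} {actN : N → M → M} (m : M) (n : N) :
    NATensor M N actM actN :=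
  PresentedGroup.of (m, n)

/-- A crossed square of groups (axioms (X0)–(X4) of Guin-Waléry–Brown–Loday), given by the
commutative square `μ ∘ p_M = ν ∘ p_N`, actions `σM`, `σN`, `σP` of `L` on `M`, `N`, `P`
and a function `h : M × N → P`. -/
def IsCrossedSquareGrp {P M N L : Type*} [Group P] [Group M] [Group N] [Group L]
    (pM : P →* M) (pN : P →* N) (μ : M →* L) (ν : N →* L)
    (σM : L →* MulAut M) (σN : L →* MulAut N) (σP : L →* MulAut P)
    (h : M → N → P) : Prop :=
  -- commutative square
  μ.comp pM = ν.comp pN ∧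
  -- (X.0)
  (∀ m m' n, h (m * m') n = σP (μ m) (h m' n) * h m n) ∧
  (∀ m n n', h m (n * n') = h m n * σP (ν n) (h m n')) ∧
  -- (X.1)
  (∀ l p, pM (σP l p) = σM l (pM p)) ∧
  (∀ l p, pN (σP l p) = σN l (pN p)) ∧
  IsCrossedModule μ σM ∧ IsCrossedModule ν σN ∧ IsCrossedModule (μ.comp pM) σP ∧
  -- (X.2)
  (∀ m n, pM (h m n) = m * (σM (ν n) m)⁻¹) ∧
  (∀ m n, pN (h m n) = σN (μ m) n * n⁻¹) ∧
  -- (X.3)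
  (∀ p n, h (pM p) n = p * (σP (ν n) p)⁻¹) ∧
  (∀ m p, h m (pN p) = σP (μ m) p * p⁻¹) ∧
  -- (X.4)
  (∀ l m n, σP l (h m n) = h (σM l m) (σN l n))

section NATensorAux

variable {M N : Type*} [Group M] [Group N] {actM : M → N → N} {actN : N → M → M}

/-- Induction principle for the non-abelian tensor product. -/
theorem NATensor.inductionOn {C : NATensor M N actM actN → Prop}
    (t : NATensor M N actM actN) (h1 : C 1)
    (hof : ∀ m n, C (tensorOf m n))
    (hinv : ∀ t, C t → C t⁻¹)
    (hmul : ∀ t s, C t → C s → C (t * s)) : C t := by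
  refine PresentedGroup.induction_on t fun z => ?_
  induction z using FreeGroup.induction_on with
  | C1 => rw [map_one]; exact h1
  | of x => exact hof x.1 x.2
  | inv_of x ih => rw [map_inv]; exact hinv _ ih
  | mul x y hx hy => rw [map_mul]; exact hmul _ _ hx hy

/-- The first family of defining relations, as an identity in the tensor product. -/
theorem NATensor.rel1 (m m' : M) (n : N) :
    (tensorOf (m * m') n : NATensor M N actM actN) =
      tensorOf (m * m' * m⁻¹) (actM m n) * tensorOf m n := by
  have h : (PresentedGroup.mk (tensorRels M N actM actN))
      (FreeGroup.of (m * m', n) *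
        (FreeGroup.of (m * m' * m⁻¹, actM m n) * FreeGroup.of (m, n))⁻¹) = 1 := by
    apply (QuotientGroup.eq_one_iff _).mpr
    exact Subgroup.subset_normalClosure (Or.inl ⟨(m, m', n), rfl⟩)
  rw [map_mul, map_inv, map_mul, mul_inv_eq_one] at h
  exact h

/-- The second family of defining relations, as an identity in the tensor product. -/
theorem NATensor.rel2 (m : M) (n n' : N) :
    (tensorOf m (n * n') : NATensor M N actM actN) =
      tensorOf m n * tensorOf (actN n m) (n * n' * n⁻¹) := by
  have h : (PresentedGroup.mk (tensorRels M N actM actN))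
      (FreeGroup.of (m, n * n') *
        (FreeGroup.of (m, n) * FreeGroup.of (actN n m, n * n' * n⁻¹))⁻¹) = 1 := by
    apply (QuotientGroup.eq_one_iff _).mpr
    exact Subgroup.subset_normalClosure (Or.inr ⟨(m, n, n'), rfl⟩)
  rw [map_mul, map_inv, map_mul, mul_inv_eq_one] at h
  exact h

end NATensorAux

set_option maxHeartbeats 1000000 in
/-- Given crossed modules `μ : M → L` and `ν : N → L`, the square with corners
`M ⊗ N`, `M`, `N`, `L`, the projections `π_M`, `π_N`, the `L`-action determined by
`ˡ(m ⊗ n) = (ˡm) ⊗ (ˡn)`, and `h (m, n) = m ⊗ n`, is a crossed square of groups. -/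
theorem tensor_square_is_crossed_square
    {M N L : Type*} [Group M] [Group N] [Group L]
    (μ : M →* L) (ν : N →* L) (σM : L →* MulAut M) (σN : L →* MulAut N)
    (hμ : IsCrossedModule μ σM) (hν : IsCrossedModule ν σN)
    (πM : NATensor M N (fun m n => σN (μ m) n) (fun n m => σM (ν n) m) →* M)
    (hπM : ∀ (m : M) (n : N), πM (tensorOf m n) = m * (σM (ν n) m)⁻¹)
    (πN : NATensor M N (fun m n => σN (μ m) n) (fun n m => σM (ν n) m) →* N)
    (hπN : ∀ (m : M) (n : N), πN (tensorOf m n) = σN (μ m) n * n⁻¹)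
    (φ : L →* MulAut (NATensor M N (fun m n => σN (μ m) n) (fun n m => σM (ν n) m)))
    (hφ : ∀ (l : L) (m : M) (n : N),
      φ l (tensorOf m n) = tensorOf (σM l m) (σN l n)) :
    IsCrossedSquareGrp πM πN μ ν σM σN φ (fun m n => tensorOf m n) := by
  have hμ1 : ∀ l m, μ (σM l m) = l * μ m * l⁻¹ := hμ.1
  have hμ2 : ∀ m m', σM (μ m) m' = m * m' * m⁻¹ := hμ.2
  have hν1 : ∀ l n, ν (σN l n) = l * ν n * l⁻¹ := hν.1
  have hν2 : ∀ n n', σN (ν n) n' = n * n' * n⁻¹ := hν.2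
  have φc : ∀ (g₁ g₂ : L) x, φ g₁ (φ g₂ x) = φ (g₁ * g₂) x := by
    intro g₁ g₂ x; rw [map_mul]; rfl
  have φinv : ∀ (g : L) x, φ g x⁻¹ = (φ g x)⁻¹ := fun g x => map_inv (φ g) x
  have φmul : ∀ (g : L) x y, φ g (x * y) = φ g x * φ g y := fun g x y => map_mul (φ g) x y
  -- rewritten relations
  have R1 : ∀ (m m' : M) (n : N),
      tensorOf (m * m') n = φ (μ m) (tensorOf m' n) * tensorOf m n := by
    intro m m' n
    rw [hφ, hμ2]
    exact NATensor.rel1 m m' n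
  have R2 : ∀ (m : M) (n n' : N),
      tensorOf m (n * n') = tensorOf m n * φ (ν n) (tensorOf m n') := by
    intro m n n'
    rw [hφ, hν2]
    exact NATensor.rel2 m n n'
  -- basic consequences
  have H1 : ∀ n : N, tensorOf (1 : M) n
      = (1 : NATensor M N (fun m n => σN (μ m) n) (fun n m => σM (ν n) m)) := by
    intro n
    have h := R1 1 1 n
    simp only [mul_one, map_one, MulAut.one_apply] at h
    exact (left_eq_mul.mp h)
  have H2 : ∀ m : M, tensorOf m (1 : N)
      = (1 : NATensor M N (fun m n => σN (μ m) n) (fun n m => σM (ν n) m)) := by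
    intro m
    have h := R2 m 1 1
    simp only [mul_one, map_one, MulAut.one_apply] at h
    exact (left_eq_mul.mp h)
  have H3 : ∀ (a : M) (n : N), tensorOf a⁻¹ n = (φ (μ (a⁻¹)) (tensorOf a n))⁻¹ := by
    intro a n
    have h := R1 a⁻¹ a n
    rw [inv_mul_cancel, H1] at h
    exact (mul_eq_one_iff_inv_eq.mp h.symm).symm
  have H4 : ∀ (m : M) (b : N), tensorOf m b⁻¹ = (φ (ν (b⁻¹)) (tensorOf m b))⁻¹ := by
    intro m b
    have h := R2 m b b⁻¹
    rw [mul_inv_cancel, H2] at h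
    have h2 : φ (ν b) (tensorOf m b⁻¹) = (tensorOf m b)⁻¹ :=
      (mul_eq_one_iff_inv_eq.mp h.symm).symm
    calc tensorOf m b⁻¹ = φ (ν (b⁻¹)) (φ (ν b) (tensorOf m b⁻¹)) := by
          rw [φc, ← map_mul, inv_mul_cancel, map_one, map_one, MulAut.one_apply]
      _ = φ (ν (b⁻¹)) ((tensorOf m b)⁻¹) := by rw [h2]
      _ = (φ (ν (b⁻¹)) (tensorOf m b))⁻¹ := φinv _ _
  -- the fundamental commutation identity
  have key0 : ∀ (m : M) (n : N) (m' : M) (n' : N),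
      φ (μ m * ν n) (tensorOf m' n') * tensorOf m n
        = tensorOf m n * φ (ν n * μ m) (tensorOf m' n') := by
    intro m n m' n'
    have e1 : tensorOf (m * m') (n * n')
        = φ (μ m) (tensorOf m' n * φ (ν n) (tensorOf m' n'))
            * (tensorOf m n * φ (ν n) (tensorOf m n')) := by
      rw [R1, R2 m' n n', R2 m n n']
    have e2 : tensorOf (m * m') (n * n')
        = (φ (μ m) (tensorOf m' n) * tensorOf m n)
            * φ (ν n) (φ (μ m) (tensorOf m' n') * tensorOf m n') := by
      rw [R2 (m * m') n n', R1 m m' n, R1 m m' n']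
    have e3 := e1.symm.trans e2
    simp only [φmul, φc, mul_assoc] at e3
    have e4 := mul_left_cancel e3
    rw [← mul_assoc, ← mul_assoc] at e4
    exact mul_right_cancel e4
  -- conjugation by a generator
  have conj : ∀ (m : M) (n : N) x,
      tensorOf m n * x * (tensorOf m n)⁻¹
        = φ (μ m * ν n * (μ m)⁻¹ * (ν n)⁻¹) x := by
    intro m n
    have hgen : ∀ (m'' : M) (n'' : N),
        tensorOf m n * tensorOf m'' n'' * (tensorOf m n)⁻¹
          = φ (μ m * ν n * (μ m)⁻¹ * (ν n)⁻¹) (tensorOf m'' n'') := by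
      intro m'' n''
      have hx : tensorOf (σM ((ν n * μ m)⁻¹) m'') (σN ((ν n * μ m)⁻¹) n'')
          = φ ((ν n * μ m)⁻¹) (tensorOf m'' n'') := (hφ _ m'' n'').symm
      have h := key0 m n (σM ((ν n * μ m)⁻¹) m'') (σN ((ν n * μ m)⁻¹) n'')
      rw [hx, φc, φc, mul_inv_cancel, map_one, MulAut.one_apply] at h
      have hc : (μ m * ν n) * (ν n * μ m)⁻¹ = μ m * ν n * (μ m)⁻¹ * (ν n)⁻¹ := by group
      rw [hc] at h
      rw [← h, mul_inv_cancel_right]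
    intro x
    have hext : (MulAut.conj (tensorOf m n)).toMonoidHom
        = (φ (μ m * ν n * (μ m)⁻¹ * (ν n)⁻¹)).toMonoidHom := by
      apply PresentedGroup.ext
      rintro ⟨m'', n''⟩
      simpa [MulAut.conj_apply] using hgen m'' n''
    have h := DFunLike.congr_fun hext x
    simpa [MulAut.conj_apply] using h
  have μπ : ∀ (m : M) (n : N),
      μ (πM (tensorOf m n)) = μ m * ν n * (μ m)⁻¹ * (ν n)⁻¹ := by
    intro m n
    rw [hπM, map_mul, map_inv, hμ1]
    group
  -- the Peiffer identity for the tensor square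
  have peiffer : ∀ t x, φ (μ (πM t)) x = t * x * t⁻¹ := by
    intro t
    induction t using NATensor.inductionOn with
    | h1 => intro x; simp
    | hof m n => intro x; rw [μπ]; exact (conj m n x).symm
    | hinv t ht =>
      intro x
      have h' : φ (μ (πM t)) (t⁻¹ * x * t) = x := by rw [ht]; group
      have e : μ (πM t⁻¹) = (μ (πM t))⁻¹ := by rw [map_inv, map_inv]
      calc φ (μ (πM t⁻¹)) x
          = φ ((μ (πM t))⁻¹) (φ (μ (πM t)) (t⁻¹ * x * t)) := by rw [h', e]
        _ = t⁻¹ * x * t := by rw [φc, inv_mul_cancel, map_one, MulAut.one_apply]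
        _ = t⁻¹ * x * t⁻¹⁻¹ := by rw [inv_inv]
    | hmul t s ht hs =>
      intro x
      rw [map_mul, map_mul, ← φc, hs, ht]
      group
  -- the commutative square
  have commsq : μ.comp πM = ν.comp πN := by
    apply PresentedGroup.ext
    rintro ⟨m, n⟩
    show μ (πM (tensorOf m n)) = ν (πN (tensorOf m n))
    rw [hπM, hπN, map_mul, map_inv, hμ1, map_mul, map_inv, hν1]
    group
  have commν : ∀ t, ν (πN t) = μ (πM t) := fun t => (DFunLike.congr_fun commsq t).symm
  -- equivariance of the projections
  have X1a : ∀ l t, πM (φ l t) = σM l (πM t) := by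
    have hh : ∀ l : L, πM.comp (φ l).toMonoidHom = (σM l).toMonoidHom.comp πM := by
      intro l
      apply PresentedGroup.ext
      rintro ⟨m, n⟩
      show πM (φ l (tensorOf m n)) = σM l (πM (tensorOf m n))
      rw [hφ, hπM, hπM, map_mul, map_inv]
      have h2 : σM (ν (σN l n)) (σM l m) = σM l (σM (ν n) m) := by
        rw [hν1, ← MulAut.mul_apply, ← MulAut.mul_apply, ← map_mul, ← map_mul]
        have h3 : l * ν n * l⁻¹ * l = l * ν n := by group
        rw [h3]
      rw [h2]
    intro l t
    exact DFunLike.congr_fun (hh l) t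
  have X1b : ∀ l t, πN (φ l t) = σN l (πN t) := by
    have hh : ∀ l : L, πN.comp (φ l).toMonoidHom = (σN l).toMonoidHom.comp πN := by
      intro l
      apply PresentedGroup.ext
      rintro ⟨m, n⟩
      show πN (φ l (tensorOf m n)) = σN l (πN (tensorOf m n))
      rw [hφ, hπN, hπN, map_mul, map_inv]
      have h2 : σN (μ (σM l m)) (σN l n) = σN l (σN (μ m) n) := by
        rw [hμ1, ← MulAut.mul_apply, ← MulAut.mul_apply, ← map_mul, ← map_mul]
        have h3 : l * μ m * l⁻¹ * l = l * μ m := by group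
        rw [h3]
      rw [h2]
    intro l t
    exact DFunLike.congr_fun (hh l) t
  -- (X3) first identity
  have X3a : ∀ t (n : N), tensorOf (πM t) n = t * (φ (ν n) t)⁻¹ := by
    intro t
    induction t using NATensor.inductionOn with
    | h1 => intro n; simp [H1]
    | hof m n₀ =>
      intro n
      have hπ : πM (tensorOf m n₀) = m * (σM (ν n₀) m)⁻¹ := hπM m n₀
      have hswap : n * n₀ = n₀ * σN (ν (n₀⁻¹)) n := by rw [hν2]; group
      have key : tensorOf m n * φ (ν n) (tensorOf m n₀)
          = tensorOf m n₀ * φ (ν n₀) (tensorOf m (σN (ν (n₀⁻¹)) n)) := by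
        rw [← R2 m n n₀, hswap, R2]
      have h2 : σN (ν n₀) (σN (ν (n₀⁻¹)) n) = n := by
        rw [← MulAut.mul_apply, ← map_mul, ← map_mul, mul_inv_cancel, map_one, map_one,
          MulAut.one_apply]
      have hTan : tensorOf (σM (ν n₀) m) n = φ (ν n₀) (tensorOf m (σN (ν (n₀⁻¹)) n)) := by
        rw [hφ, h2]
      calc tensorOf (πM (tensorOf m n₀)) n
          = φ (μ m) (tensorOf (σM (ν n₀) m)⁻¹ n) * tensorOf m n := by rw [hπ, R1]
        _ = φ (μ m) ((φ (μ ((σM (ν n₀) m)⁻¹))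
              (φ (ν n₀) (tensorOf m (σN (ν (n₀⁻¹)) n))))⁻¹) * tensorOf m n := by
            rw [H3, hTan]
        _ = (φ (μ m * (μ ((σM (ν n₀) m)⁻¹) * ν n₀))
              (tensorOf m (σN (ν (n₀⁻¹)) n)))⁻¹ * tensorOf m n := by
            rw [φc, φinv, φc]
        _ = (φ ((μ m * ν n₀ * (μ m)⁻¹ * (ν n₀)⁻¹) * ν n₀)
              (tensorOf m (σN (ν (n₀⁻¹)) n)))⁻¹ * tensorOf m n := by
            have hμa : μ ((σM (ν n₀) m)⁻¹) = (ν n₀ * μ m * (ν n₀)⁻¹)⁻¹ := by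
              rw [map_inv, hμ1]
            rw [hμa]
            have hL : μ m * ((ν n₀ * μ m * (ν n₀)⁻¹)⁻¹ * ν n₀)
                = (μ m * ν n₀ * (μ m)⁻¹ * (ν n₀)⁻¹) * ν n₀ := by group
            rw [hL]
        _ = (φ (μ m * ν n₀ * (μ m)⁻¹ * (ν n₀)⁻¹)
              (φ (ν n₀) (tensorOf m (σN (ν (n₀⁻¹)) n))))⁻¹ * tensorOf m n := by
            rw [φc]
        _ = (tensorOf m n₀ * φ (ν n₀) (tensorOf m (σN (ν (n₀⁻¹)) n))
              * (tensorOf m n₀)⁻¹)⁻¹ * tensorOf m n := by rw [← conj]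
        _ = tensorOf m n₀ * (φ (ν n) (tensorOf m n₀))⁻¹ := by
            rw [← key]; group
    | hinv t ht =>
      intro n
      rw [map_inv πM, H3, ht n]
      have hp : φ (μ ((πM t)⁻¹)) (t * (φ (ν n) t)⁻¹)
          = t⁻¹ * (t * (φ (ν n) t)⁻¹) * t⁻¹⁻¹ := by
        have e : μ ((πM t)⁻¹) = μ (πM t⁻¹) := by rw [← map_inv πM]
        rw [e]; exact peiffer t⁻¹ _
      rw [hp, φinv]
      group
    | hmul t s ht hs =>
      intro n
      rw [map_mul πM, R1, peiffer t, hs n, ht n, φmul]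
      group
  -- (X3) second identity
  have X3b : ∀ t (m : M), tensorOf m (πN t) = φ (μ m) t * t⁻¹ := by
    intro t
    induction t using NATensor.inductionOn with
    | h1 => intro m; simp [H2]
    | hof m₀ n =>
      intro m
      have hπ : πN (tensorOf m₀ n) = σN (μ m₀) n * n⁻¹ := hπN m₀ n
      have hswap : m * m₀ = m₀ * σM (μ (m₀⁻¹)) m := by rw [hμ2]; group
      have key : φ (μ m) (tensorOf m₀ n) * tensorOf m n
          = φ (μ m₀) (tensorOf (σM (μ (m₀⁻¹)) m) n) * tensorOf m₀ n := by
        rw [← R1 m m₀ n, hswap, R1]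
      have hkey2 : φ (μ m₀) (tensorOf (σM (μ (m₀⁻¹)) m) n)
          = φ (μ m) (tensorOf m₀ n) * tensorOf m n * (tensorOf m₀ n)⁻¹ := by
        rw [key]; group
      have h2 : σM (μ m₀) (σM (μ (m₀⁻¹)) m) = m := by
        rw [← MulAut.mul_apply, ← map_mul, ← map_mul, mul_inv_cancel, map_one, map_one,
          MulAut.one_apply]
      have hTmb : tensorOf m (σN (μ m₀) n) = φ (μ m₀) (tensorOf (σM (μ (m₀⁻¹)) m) n) := by
        rw [hφ, h2]
      calc tensorOf m (πN (tensorOf m₀ n))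
          = tensorOf m (σN (μ m₀) n) * φ (ν (σN (μ m₀) n)) (tensorOf m n⁻¹) := by
            rw [hπ, R2]
        _ = φ (μ m₀) (tensorOf (σM (μ (m₀⁻¹)) m) n)
              * φ (ν (σN (μ m₀) n)) ((φ (ν (n⁻¹)) (tensorOf m n))⁻¹) := by
            rw [hTmb, H4]
        _ = φ (μ m₀) (tensorOf (σM (μ (m₀⁻¹)) m) n)
              * (φ (ν (σN (μ m₀) n) * ν (n⁻¹)) (tensorOf m n))⁻¹ := by
            rw [φinv, φc]
        _ = φ (μ m₀) (tensorOf (σM (μ (m₀⁻¹)) m) n)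
              * (φ (μ m₀ * ν n * (μ m₀)⁻¹ * (ν n)⁻¹) (tensorOf m n))⁻¹ := by
            have h3 : ν (σN (μ m₀) n) * ν (n⁻¹) = μ m₀ * ν n * (μ m₀)⁻¹ * (ν n)⁻¹ := by
              rw [hν1, map_inv]
            rw [h3]
        _ = φ (μ m₀) (tensorOf (σM (μ (m₀⁻¹)) m) n)
              * (tensorOf m₀ n * (tensorOf m n)⁻¹ * (tensorOf m₀ n)⁻¹) := by
            rw [← φinv, ← conj]
        _ = φ (μ m) (tensorOf m₀ n) * (tensorOf m₀ n)⁻¹ := by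
            rw [hkey2]; group
    | hinv t ht =>
      intro m
      rw [map_inv πN, H4, ht m]
      have e : ν ((πN t)⁻¹) = μ (πM t⁻¹) := by rw [← map_inv πN, commν]
      rw [e, peiffer, φinv]
      group
    | hmul t s ht hs =>
      intro m
      rw [map_mul πN, R2, commν, peiffer t, ht m, hs m, φmul]
      group
  -- crossed module structure on the composite
  have cm3 : IsCrossedModule (μ.comp πM) φ := by
    constructor
    · intro l t
      show μ (πM (φ l t)) = l * μ (πM t) * l⁻¹
      rw [X1a, hμ1]
    · intro t t'
      exact peiffer t t'
  exact ⟨commsq, R1, R2, X1a, X1b, hμ, hν, cm3, hπM, hπN,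
    fun p n => X3a p n, fun m p => X3b p m, fun l m n => hφ l m n⟩
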